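/- Let n ≥ 2 and let A₁, …, Aₙ be sets. Suppose R ⊆ Π Aᵢ is a subdirect relation (each coordinate projection of R is surjective) satisfying the parallelogram property: for every partition of Fin n into nonempty sets S, T, if the tuples a⌢u, a⌢v, b⌢v all lie in R (where a, b ∈ A^S and u, v ∈ A^T, and x⌢y denotes the tuple agreeing with x on S and y on T), then b⌢u ∈ R. For each i define θᵢ ⊆ Aᵢ × Aᵢ by (a, b) ∈ θᵢ iff there exists c ∈ Π_{j≠i} Aⱼ with both the tuple extending c by a at i and the tuple extending c by b at i in R. Then each θᵢ is an equivalence relation on Aᵢ. -/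

import Mathlib

/-- The parallelogram property for a relation `R ⊆ Π i, A i`: for every
partition of `Fin n` into two nonempty cells `S` and `Sᶜ`, if
`a⌢u, a⌢v, b⌢v ∈ R` then `b⌢u ∈ R`. -/
def Parallelogram {n : ℕ} {A : Fin n → Type*} (R : Set (∀ i, A i)) : Prop :=
  ∀ S : Set (Fin n), S.Nonempty → Sᶜ.Nonempty →
    ∀ p q r s : ∀ i, A i, p ∈ R → q ∈ R → r ∈ R →
      (∀ i ∈ S, p i = q i) → (∀ i ∈ S, r i = s i) →
      (∀ i ∉ S, q i = r i) → (∀ i ∉ S, p i = s i) → s ∈ R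

/-- The coordinate kernel of `R` at coordinate `i`. -/
def CoordKernel {n : ℕ} {A : Fin n → Type*} (R : Set (∀ i, A i)) (i : Fin n)
    (a b : A i) : Prop :=
  ∃ p q : ∀ j, A j, p ∈ R ∧ q ∈ R ∧ p i = a ∧ q i = b ∧ ∀ j ≠ i, p j = q j

theorem stmt11 {n : ℕ} (hn : 2 ≤ n) {A : Fin n → Type*} (R : Set (∀ i, A i))
    (hsd : ∀ i : Fin n, ∀ a : A i, ∃ r ∈ R, r i = a)
    (hpar : Parallelogram R) (i : Fin n) :
    Equivalence (CoordKernel R i) := by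
  constructor
  · intro a
    obtain ⟨r, hr, hri⟩ := hsd i a
    exact ⟨r, r, hr, hr, hri, hri, fun _ _ => rfl⟩
  · rintro a b ⟨p, q, hp, hq, hpi, hqi, hpq⟩
    exact ⟨q, p, hq, hp, hqi, hpi, fun j hj => (hpq j hj).symm⟩
  · rintro a b c ⟨p, q, hp, hq, hpi, hqi, hpq⟩ ⟨p', q', hp', hq', hpi', hqi', hpq'⟩
    -- there is some j ≠ i since n ≥ 2
    have hj : ∃ j : Fin n, j ≠ i := by
      rcases Fintype.exists_ne_of_one_lt_card (by simp; omega) i with ⟨j, hj⟩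
      exact ⟨j, hj⟩
    obtain ⟨j, hji⟩ := hj
    set s : ∀ k, A k := Function.update p' i a with hs
    have hsmem : s ∈ R := by
      apply hpar {i}ᶜ ⟨j, by simpa using hji⟩ ⟨i, by simp⟩ p q p' s hp hq hp'
      · intro k hk
        exact hpq k (by simpa using hk)
      · intro k hk
        rw [hs, Function.update_of_ne (by simpa using hk)]
      · intro k hk
        have : k = i := by simpa using hk
        subst this
        rw [hqi, hpi']
      · intro k hk
        have : k = i := by simpa using hk
        subst this
        rw [hpi, hs, Function.update_self]
    refine ⟨s, q', hsmem, hq', by rw [hs, Function.update_self], hqi', fun k hk => ?_⟩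
    rw [hs, Function.update_of_ne hk, hpq' k hk]
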